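/- arXiv:2206.03793 — 3 statements merged into one kernel-verified Lean document; each statement's English description precedes it below -/
import Mathlib

section
/- Let P be an abstract polytope of rank at least 1. Then the prism P ×c I is not a pyramid: there is no abstract polytope Q such that P ×c I is order-isomorphic to Q * pt. -/
universe u v

/-- An abstract polytope of rank `n ≥ -1`: a partial order with a least element (the `⊥` of the
`OrderBot` instance) and a greatest element, in which every maximal chain has exactly `n + 2`
elements, every interval admitting a maximal chain of at least 4 elements is connected, and the
diamond condition holds. -/
structure IsAbstractPolytope (P : Type u) [PartialOrder P] [OrderBot P] (n : ℤ) : Prop where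
  neg_one_le : -1 ≤ n
  exists_top : ∃ t : P, IsTop t
  maxChain_card : ∀ s : Set P, IsMaxChain (· ≤ ·) s → s.ncard = (n + 2).toNat
  connected : ∀ x z : P, x ≤ z →
      (∃ c : Set (Set.Icc x z), IsMaxChain (· ≤ ·) c ∧ 4 ≤ c.ncard) →
      ∀ F G : Set.Icc x z, (F : P) ≠ x → (F : P) ≠ z → (G : P) ≠ x → (G : P) ≠ z →
        Relation.ReflTransGen
          (fun a b : Set.Icc x z =>
            ((a : P) ≠ x ∧ (a : P) ≠ z ∧ (b : P) ≠ x ∧ (b : P) ≠ z) ∧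
              ((a : P) ≤ (b : P) ∨ (b : P) ≤ (a : P))) F G
  diamond : ∀ x z : P, x < z →
      (∀ c : Set (Set.Icc x z), IsMaxChain (· ≤ ·) c → c.ncard = 4) →
      {y : P | x < y ∧ y < z}.ncard = 2

/-- `x` has rank `k` if every maximal chain of the interval `[⊥, x] = Set.Iic x`
has exactly `k + 2` elements. -/
def HasRank {P : Type u} [PartialOrder P] [OrderBot P] (x : P) (k : ℤ) : Prop :=
  ∀ c : Set (Set.Iic x), IsMaxChain (· ≤ ·) c → c.ncard = (k + 2).toNat

/-- The Cartesian product `P ×c Q` of two bounded posets: the subposet of `P × Q`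
consisting of `(⊥, ⊥)` together with all pairs with both entries different from `⊥`.
(The join `P * Q` is just `P × Q` with the componentwise order.) -/
abbrev CartProd (P : Type u) (Q : Type v) [PartialOrder P] [OrderBot P]
    [PartialOrder Q] [OrderBot Q] : Type (max u v) :=
  {x : P × Q // x = (⊥, ⊥) ∨ (x.1 ≠ ⊥ ∧ x.2 ≠ ⊥)}

instance CartProd.instOrderBot (P : Type u) (Q : Type v) [PartialOrder P] [OrderBot P]
    [PartialOrder Q] [OrderBot Q] : OrderBot (CartProd P Q) where
  bot := ⟨(⊥, ⊥), Or.inl rfl⟩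
  bot_le x := show ((⊥, ⊥) : P × Q) ≤ x.val from bot_le

/-- The iterated Cartesian product of a family of bounded posets: tuples which are either
everywhere `⊥` or nowhere `⊥`. -/
abbrev CartPi {ι : Type v} (Q : ι → Type u) [∀ i, PartialOrder (Q i)] [∀ i, OrderBot (Q i)] :
    Type (max u v) :=
  {f : (i : ι) → Q i // (∀ i, f i = ⊥) ∨ (∀ i, f i ≠ ⊥)}

instance CartPi.instOrderBot {ι : Type v} (Q : ι → Type u) [∀ i, PartialOrder (Q i)]
    [∀ i, OrderBot (Q i)] : OrderBot (CartPi Q) where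
  bot := ⟨fun _ => ⊥, Or.inl fun _ => rfl⟩
  bot_le f := show (fun _ => ⊥) ≤ f.val from bot_le

/-- The `k`-fold Cartesian product of a bounded poset with itself. -/
abbrev CartPow (P : Type u) [PartialOrder P] [OrderBot P] (k : ℕ) : Type u :=
  CartPi (fun _ : Fin k => P)

/-- A bundled poset with a least element. -/
structure BddPoset : Type (u + 1) where
  carrier : Type u
  [po : PartialOrder carrier]
  [ob : OrderBot carrier]

attribute [instance] BddPoset.po BddPoset.ob

instance : CoeSort BddPoset.{u} (Type u) := ⟨BddPoset.carrier⟩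

/-- Prime with respect to the join: not order-isomorphic to a join `A * B = A × B` of two
abstract polytopes of rank at least `0`. -/
def JoinPrime (X : Type u) [PartialOrder X] [OrderBot X] : Prop :=
  ¬ ∃ (A B : BddPoset.{u}) (a b : ℤ), 0 ≤ a ∧ 0 ≤ b ∧
      IsAbstractPolytope A.carrier a ∧ IsAbstractPolytope B.carrier b ∧
      Nonempty (X ≃o (A.carrier × B.carrier))

/-- Prime with respect to the Cartesian product: not order-isomorphic to a Cartesian product
of two abstract polytopes of rank at least `1`. -/
def CartPrime (X : Type u) [PartialOrder X] [OrderBot X] : Prop :=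
  ¬ ∃ (A B : BddPoset.{u}) (a b : ℤ), 1 ≤ a ∧ 1 ≤ b ∧
      IsAbstractPolytope A.carrier a ∧ IsAbstractPolytope B.carrier b ∧
      Nonempty (X ≃o CartProd A.carrier B.carrier)

/-- `R` is a factor of `X` with respect to the join. -/
def JoinFactor (R : BddPoset.{u}) (X : Type u) [PartialOrder X] [OrderBot X] : Prop :=
  ∃ S : BddPoset.{u}, (∃ s : ℤ, IsAbstractPolytope S.carrier s) ∧
    Nonempty (X ≃o (R.carrier × S.carrier))

/-- `R` is a factor of `X` with respect to the Cartesian product. -/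
def CartFactor (R : BddPoset.{u}) (X : Type u) [PartialOrder X] [OrderBot X] : Prop :=
  ∃ S : BddPoset.{u}, (∃ s : ℤ, IsAbstractPolytope S.carrier s) ∧
    Nonempty (X ≃o CartProd R.carrier S.carrier)

/-- Relatively prime with respect to the join: no join-prime abstract polytope of rank `≥ 0` is a
join-factor of both. -/
def JoinRelPrime (X : Type u) [PartialOrder X] [OrderBot X]
    (Y : Type u) [PartialOrder Y] [OrderBot Y] : Prop :=
  ¬ ∃ R : BddPoset.{u}, (∃ r : ℤ, 0 ≤ r ∧ IsAbstractPolytope R.carrier r) ∧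
      JoinPrime R.carrier ∧ JoinFactor R X ∧ JoinFactor R Y

/-- Relatively prime with respect to the Cartesian product. -/
def CartRelPrime (X : Type u) [PartialOrder X] [OrderBot X]
    (Y : Type u) [PartialOrder Y] [OrderBot Y] : Prop :=
  ¬ ∃ R : BddPoset.{u}, (∃ r : ℤ, 1 ≤ r ∧ IsAbstractPolytope R.carrier r) ∧
      CartPrime R.carrier ∧ CartFactor R X ∧ CartFactor R Y

/-- A pyramid: order-isomorphic to `Q * pt` for some abstract polytope `Q`, where
`pt = Bool` is the two-element chain. -/
def IsPyramid (X : Type u) [PartialOrder X] [OrderBot X] : Prop :=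
  ∃ Q : BddPoset.{u}, (∃ q : ℤ, IsAbstractPolytope Q.carrier q) ∧
    Nonempty (X ≃o (Q.carrier × Bool))

/-- A prism: order-isomorphic to `Q ×c I` for some abstract polytope `Q`, where
`I = Bool × Bool` is the four-element rank-one polytope. -/
def IsPrism (X : Type u) [PartialOrder X] [OrderBot X] : Prop :=
  ∃ Q : BddPoset.{u}, (∃ q : ℤ, IsAbstractPolytope Q.carrier q) ∧
    Nonempty (X ≃o CartProd Q.carrier (Bool × Bool))

/-- The homomorphism from `Equiv.Perm ι` to automorphisms of `ι → G` permuting the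
coordinates: `σ` sends `v` to `v ∘ σ⁻¹`. -/
def permHom (ι : Type v) (G : Type u) [Group G] : Equiv.Perm ι →* MulAut (ι → G) where
  toFun σ :=
    { toFun := fun v => v ∘ σ.symm
      invFun := fun v => v ∘ σ
      left_inv := fun v => by funext i; simp
      right_inv := fun v => by funext i; simp
      map_mul' := fun v w => rfl }
  map_one' := by apply MulEquiv.ext; intro v; funext i; rfl
  map_mul' σ τ := by apply MulEquiv.ext; intro v; funext i; rfl


section Aux

open Classical

private lemma cart_le {P : Type*} {Q' : Type*} [PartialOrder P] [OrderBot P]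
    [PartialOrder Q'] [OrderBot Q'] {x y : CartProd P Q'} :
    x ≤ y ↔ x.val.1 ≤ y.val.1 ∧ x.val.2 ≤ y.val.2 := Iff.rfl

private lemma ap_middle {Q : Type*} [PartialOrder Q] [OrderBot Q] {q : ℤ} (hq : 1 ≤ q)
    (hQ : IsAbstractPolytope Q q) {t : Q} (ht : IsTop t) :
    ∃ y : Q, y ≠ ⊥ ∧ y ≠ t := by
  obtain ⟨c, hc, -⟩ := (IsChain.empty (r := (· ≤ ·)) (α := Q)).exists_maxChain
  have hcard := hQ.maxChain_card c hc
  by_contra h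
  push_neg at h
  have hsub : c ⊆ {⊥, t} := by
    intro y hy
    rcases eq_or_ne y ⊥ with rfl | hy0
    · exact Or.inl rfl
    · exact Or.inr (h y hy0)
  have h2 : c.ncard ≤ 2 :=
    le_trans (Set.ncard_le_ncard hsub (Set.toFinite _))
      (le_trans (Set.ncard_insert_le _ _) (by simp))
  omega

private lemma ap_small {Q : Type*} [PartialOrder Q] [OrderBot Q] {q : ℤ} (hq : q ≤ 0)
    (hQ : IsAbstractPolytope Q q) {t : Q} (ht : IsTop t) (x : Q) : x = ⊥ ∨ x = t := by
  by_contra h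
  push_neg at h
  obtain ⟨hx0, hxt⟩ := h
  have ht0 : t ≠ ⊥ := fun h' => hx0 (le_bot_iff.mp (h' ▸ ht x))
  have hchain : IsChain (· ≤ ·) ({⊥, x, t} : Set Q) := by
    intro a ha b hb _
    simp only [Set.mem_insert_iff, Set.mem_singleton_iff] at ha hb
    rcases ha with rfl | rfl | rfl <;> rcases hb with rfl | rfl | rfl <;>
      simp [bot_le, ht _, le_refl]
  obtain ⟨c, hc, hsub⟩ := hchain.exists_maxChain
  have hcard := hQ.maxChain_card c hc
  have hq1 := hQ.neg_one_le
  rcases c.finite_or_infinite with hfin | hinf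
  · have h3 : ({⊥, x, t} : Set Q).ncard = 3 := by
      rw [Set.ncard_insert_of_notMem (by simp [Ne.symm hx0, Ne.symm ht0]),
        Set.ncard_insert_of_notMem (by simp [hxt]), Set.ncard_singleton]
    have hle := Set.ncard_le_ncard hsub hfin
    omega
  · rw [Set.Infinite.ncard hinf] at hcard
    omega

private lemma pyramid_side {Q : Type*} [PartialOrder Q] [OrderBot Q] {q : ℤ}
    (hq : 1 ≤ q) (hQ : IsAbstractPolytope Q q) {t : Q} (ht : IsTop t)
    (c1 c2 : Q × Bool) (hne : c1 ≠ c2)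
    (hco1 : ∀ z, c1 < z → z = (t, true)) (hco2 : ∀ z, c2 < z → z = (t, true)) :
    ∃ z : Q × Bool, z ≠ ⊥ ∧ z ≤ c1 ∧ z ≤ c2 := by
  obtain ⟨y, hy0, hyt⟩ := ap_middle hq hQ ht
  have key : ∀ a : Q, (∀ z, (a, false) < z → z = (t, true)) → a = t := by
    intro a hco
    have h1 : ((a, true) : Q × Bool) = (t, true) := by
      refine hco _ (lt_of_le_of_ne (Prod.mk_le_mk.mpr ⟨le_rfl, Bool.false_le _⟩) ?_)
      simp
    rw [Prod.mk.injEq] at h1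
    exact h1.1
  have mixed : ∀ a b : Q, (∀ z, (a, false) < z → z = (t, true)) →
      (∀ z, (b, true) < z → z = (t, true)) →
      ∃ z : Q × Bool, z ≠ ⊥ ∧ z ≤ (a, false) ∧ z ≤ (b, true) := by
    intro a b hcoa hcob
    have ha : a = t := key a hcoa
    have hb0 : b ≠ ⊥ := by
      rintro rfl
      have h1 : ((y, true) : Q × Bool) = (t, true) := by
        refine hcob _ (lt_of_le_of_ne (Prod.mk_le_mk.mpr ⟨bot_le, le_rfl⟩) ?_)
        simp [Ne.symm hy0]
      rw [Prod.mk.injEq] at h1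
      exact hyt h1.1
    refine ⟨(b, false), ?_, Prod.mk_le_mk.mpr ⟨ha ▸ ht b, le_rfl⟩,
      Prod.mk_le_mk.mpr ⟨le_rfl, Bool.false_le _⟩⟩
    intro h
    have h1 : b = (⊥ : Q × Bool).1 := congrArg Prod.fst h
    exact hb0 h1
  obtain ⟨a1, b1⟩ := c1
  obtain ⟨a2, b2⟩ := c2
  cases b1
  · cases b2
    · exact absurd (by rw [key a1 hco1, key a2 hco2]) hne
    · exact mixed a1 a2 hco1 hco2
  · cases b2
    · obtain ⟨z, hz0, hz1, hz2⟩ := mixed a2 a1 hco2 hco1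
      exact ⟨z, hz0, hz2, hz1⟩
    · refine ⟨(⊥, true), ?_, Prod.mk_le_mk.mpr ⟨bot_le, le_rfl⟩,
        Prod.mk_le_mk.mpr ⟨bot_le, le_rfl⟩⟩
      intro h
      have h1 : true = ((⊥ : Q × Bool).2 : Bool) := congrArg Prod.snd h
      simp [Prod.snd] at h1

end Aux

/-- For an abstract polytope `P` of rank at least `1`, the prism `P ×c I` is not a
pyramid (where `I = Bool × Bool` is the rank-one polytope). -/
theorem prism_not_pyramid (P : Type u) [PartialOrder P] [OrderBot P] (n : ℤ) (hn : 1 ≤ n)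
    (hP : IsAbstractPolytope P n) :
    ¬ IsPyramid (CartProd P (Bool × Bool)) := by
  classical
  rintro ⟨Q, ⟨q, hQ⟩, ⟨f⟩⟩
  obtain ⟨tP, htP⟩ := hP.exists_top
  obtain ⟨tQ, htQ⟩ := hQ.exists_top
  obtain ⟨p, hp0, hpt⟩ := ap_middle hn hP htP
  have htP0 : tP ≠ ⊥ := fun h => hp0 (le_bot_iff.mp (h ▸ htP p))
  have hv1 : ((true, false) : Bool × Bool) ≠ ⊥ := by decide
  have hv2 : ((false, true) : Bool × Bool) ≠ ⊥ := by decide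
  have hvt : ((true, true) : Bool × Bool) ≠ ⊥ := by decide
  let X := CartProd P (Bool × Bool)
  let x1 : X := ⊥
  let x2 : X := ⟨(p, (true, false)), Or.inr ⟨hp0, hv1⟩⟩
  let x3 : X := ⟨(p, (false, true)), Or.inr ⟨hp0, hv2⟩⟩
  let x4 : X := ⟨(tP, (true, false)), Or.inr ⟨htP0, hv1⟩⟩
  let x5 : X := ⟨(tP, (true, true)), Or.inr ⟨htP0, hvt⟩⟩
  let x6 : X := ⟨(tP, (false, true)), Or.inr ⟨htP0, hv2⟩⟩
  rcases le_or_gt 1 q with hq1 | hq0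
  · -- main case: Q has rank at least 1
    have hx5top : IsTop x5 := by
      intro z
      exact cart_le.mpr ⟨htP _, Prod.le_def.mpr ⟨Bool.le_true _, Bool.le_true _⟩⟩
    have hfx5 : f x5 = (tQ, true) := by
      apply le_antisymm (Prod.le_def.mpr ⟨htQ _, Bool.le_true _⟩)
      have h1 : f (f.symm (tQ, true)) ≤ f x5 := f.monotone (hx5top _)
      rwa [f.apply_symm_apply] at h1
    have hco4 : ∀ z : X, x4 < z → z = x5 := by
      rintro ⟨⟨a, b1, b2⟩, hz⟩ hlt
      obtain ⟨h1, h2⟩ := cart_le.mp hlt.le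
      obtain ⟨h21, h22⟩ := Prod.le_def.mp h2
      have ha : a = tP := le_antisymm (htP a) h1
      subst ha
      cases b1
      · exact absurd h21 (show ¬((true : Bool) ≤ false) by decide)
      · cases b2
        · exact absurd rfl hlt.ne
        · rfl
    have hco6 : ∀ z : X, x6 < z → z = x5 := by
      rintro ⟨⟨a, b1, b2⟩, hz⟩ hlt
      obtain ⟨h1, h2⟩ := cart_le.mp hlt.le
      obtain ⟨h21, h22⟩ := Prod.le_def.mp h2
      have ha : a = tP := le_antisymm (htP a) h1
      subst ha
      cases b2
      · exact absurd h22 (show ¬((true : Bool) ≤ false) by decide)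
      · cases b1
        · exact absurd rfl hlt.ne
        · rfl
    have hmeet : ∀ z : X, z ≤ x4 → z ≤ x6 → z = ⊥ := by
      rintro ⟨⟨a, b1, b2⟩, hz⟩ h4 h6
      obtain ⟨-, h42⟩ := cart_le.mp h4
      obtain ⟨-, h62⟩ := cart_le.mp h6
      have hb1 : b1 = false := by
        have := (Prod.le_def.mp h62).1
        cases b1
        · rfl
        · exact absurd this (show ¬((true : Bool) ≤ false) by decide)
      have hb2 : b2 = false := by
        have := (Prod.le_def.mp h42).2
        cases b2
        · rfl
        · exact absurd this (show ¬((true : Bool) ≤ false) by decide)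
      subst hb1; subst hb2
      rcases hz with hz | ⟨-, hb'⟩
      · exact Subtype.ext hz
      · exact absurd rfl hb'
    have hco4' : ∀ z, f x4 < z → z = (tQ, true) := by
      intro z hz
      have h1 : x4 < f.symm z := by
        rw [← f.lt_iff_lt, f.apply_symm_apply]
        exact hz
      have h2 := hco4 _ h1
      rw [← f.apply_symm_apply z, h2, hfx5]
    have hco6' : ∀ z, f x6 < z → z = (tQ, true) := by
      intro z hz
      have h1 : x6 < f.symm z := by
        rw [← f.lt_iff_lt, f.apply_symm_apply]
        exact hz
      have h2 := hco6 _ h1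
      rw [← f.apply_symm_apply z, h2, hfx5]
    have hne46 : f x4 ≠ f x6 := by
      apply f.injective.ne
      intro h
      have h2 : ((true, false) : Bool × Bool) = (false, true) :=
        congrArg (fun z : X => z.val.2) h
      exact absurd h2 (by decide)
    obtain ⟨z, hz0, hz4, hz6⟩ := pyramid_side hq1 hQ htQ _ _ hne46 hco4' hco6'
    apply hz0
    have h4 : f.symm z ≤ x4 := by
      rw [← f.le_iff_le, f.apply_symm_apply]
      exact hz4
    have h6 : f.symm z ≤ x6 := by
      rw [← f.le_iff_le, f.apply_symm_apply]
      exact hz6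
    have hb := hmeet _ h4 h6
    rw [← f.apply_symm_apply z, hb, f.map_bot]
  · -- degenerate case: Q has rank at most 0
    have hsmall := ap_small (by omega) hQ htQ
    set κ : Q.carrier × Bool → Bool × Bool :=
      fun zb => ((if zb.1 = ⊥ then false else true), zb.2) with hκdef
    have hκ : Function.Injective κ := by
      rintro ⟨a, b⟩ ⟨a', b'⟩ h
      simp only [hκdef, Prod.mk.injEq] at h
      obtain ⟨h1, h2⟩ := h
      subst h2
      rcases eq_or_ne a ⊥ with ha | ha <;> rcases eq_or_ne a' ⊥ with ha' | ha'
      · rw [ha, ha']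
      · simp [ha, ha'] at h1
      · simp [ha, ha'] at h1
      · rcases hsmall a with rfl | rfl
        · exact absurd rfl ha
        · rcases hsmall a' with rfl | rfl
          · exact absurd rfl ha'
          · rfl
    have hinj : Function.Injective (fun x : X => κ (f x)) := hκ.comp f.injective
    have d12 : x1 ≠ x2 := fun h => hp0 (congrArg (fun z : X => z.val.1) h).symm
    have d13 : x1 ≠ x3 := fun h => hp0 (congrArg (fun z : X => z.val.1) h).symm
    have d14 : x1 ≠ x4 := fun h => htP0 (congrArg (fun z : X => z.val.1) h).symm
    have d15 : x1 ≠ x5 := fun h => htP0 (congrArg (fun z : X => z.val.1) h).symm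
    have d23 : x2 ≠ x3 := fun h =>
      absurd (show ((true, false) : Bool × Bool) = (false, true) from
        congrArg (fun z : X => z.val.2) h) (by decide)
    have d24 : x2 ≠ x4 := fun h => hpt (congrArg (fun z : X => z.val.1) h)
    have d25 : x2 ≠ x5 := fun h => hpt (congrArg (fun z : X => z.val.1) h)
    have d34 : x3 ≠ x4 := fun h => hpt (congrArg (fun z : X => z.val.1) h)
    have d35 : x3 ≠ x5 := fun h => hpt (congrArg (fun z : X => z.val.1) h)
    have d45 : x4 ≠ x5 := fun h =>
      absurd (show ((true, false) : Bool × Bool) = (true, true) from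
        congrArg (fun z : X => z.val.2) h) (by decide)
    have hnodup : ([κ (f x1), κ (f x2), κ (f x3), κ (f x4), κ (f x5)] :
        List (Bool × Bool)).Nodup := by
      have g : ∀ {u v : X}, u ≠ v → κ (f u) ≠ κ (f v) := fun h => hinj.ne h
      simp only [List.nodup_cons, List.mem_cons, List.mem_singleton, List.not_mem_nil,
        List.nodup_nil, and_true, not_or, not_false_eq_true]
      refine ⟨⟨g d12, g d13, g d14, g d15⟩, ⟨g d23, g d24, g d25⟩, ⟨g d34, g d35⟩, g d45⟩
    have hcard := hnodup.length_le_card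
    simp at hcard
end

section
/- Let P be an abstract polytope of rank at least 1. Then the pyramid P * pt is not a prism: there is no abstract polytope Q such that P * pt is order-isomorphic to Q ×c I. -/
universe u v

/-- For an abstract polytope `P` of rank at least `1`, the pyramid `P * pt` is not
a prism (where `pt = Bool` is the two-element chain). -/
theorem pyramid_not_prism (P : Type u) [PartialOrder P] [OrderBot P] (n : ℤ) (hn : 1 ≤ n)
    (hP : IsAbstractPolytope P n) :
    ¬ IsPrism (P × Bool) := by
  rintro ⟨Q, ⟨q, hQ⟩, ⟨e⟩⟩
  obtain ⟨t, ht⟩ := hQ.exists_top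
  obtain ⟨tP, htP⟩ := hP.exists_top
  by_cases htb : t = (⊥ : Q)
  · -- Q is trivial, so the prism is a subsingleton
    have hsub : ∀ z : CartProd Q (Bool × Bool), z.val = (⊥, ⊥) := by
      rintro ⟨z, hz | hz⟩
      · exact hz
      · exact absurd (le_antisymm (htb ▸ ht z.1) bot_le) hz.1
    have hinj := e.injective (Subtype.ext ((hsub (e ((⊥ : P), false))).trans
      (hsub (e ((⊥ : P), true))).symm))
    simp at hinj
  · -- main case: Q is nontrivial
    -- find a middle element w of P
    have hc : IsMaxChain (· ≤ ·) (maxChain ((· ≤ ·) : P → P → Prop)) := maxChain_spec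
    set c : Set P := maxChain ((· ≤ ·) : P → P → Prop) with hcdef
    have hcard := hP.maxChain_card c hc
    have h3 : 3 ≤ c.ncard := by omega
    have hbot : (⊥ : P) ∈ c := hc.bot_mem
    have htopm : tP ∈ c := by
      have hins : IsChain (· ≤ ·) (insert tP c) :=
        hc.isChain.insert fun b _ _ => Or.inr (htP b)
      have := hc.2 hins (Set.subset_insert _ _)
      rw [this]; exact Set.mem_insert _ _
    have hnsub : ¬ c ⊆ {(⊥ : P), tP} := by
      intro h
      have h2 : c.ncard ≤ 2 :=
        le_trans (Set.ncard_le_ncard h (Set.toFinite _))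
          (le_trans (Set.ncard_insert_le _ _) (by simp))
      omega
    obtain ⟨w, hwc, hw⟩ := Set.not_subset.mp hnsub
    simp only [Set.mem_insert_iff, Set.mem_singleton_iff, not_or] at hw
    have hwbot : w ≠ (⊥ : P) := hw.1
    have hwtop : w ≠ tP := hw.2
    -- tops
    have hT'top : IsTop ((tP, true) : P × Bool) := by
      intro x; exact Prod.le_def.mpr ⟨htP x.1, Bool.le_true x.2⟩
    have hne2 : ((true, true) : Bool × Bool) ≠ ⊥ := by decide
    set T : CartProd Q (Bool × Bool) := ⟨(t, (true, true)), Or.inr ⟨htb, hne2⟩⟩ with hTdef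
    have hTtop : IsTop T := by
      intro x
      exact Subtype.coe_le_coe.mp (Prod.le_def.mpr ⟨ht x.val.1, Prod.le_def.mpr ⟨Bool.le_true _, Bool.le_true _⟩⟩)
    have heT : e (tP, true) = T := by
      refine le_antisymm (hTtop _) ?_
      have h1 : e.symm T ≤ (tP, true) := hT'top _
      calc T = e (e.symm T) := (e.apply_symm_apply T).symm
        _ ≤ e (tP, true) := e.le_iff_le.mpr h1
    -- the two coatoms of the prism
    have hv1 : ((true, false) : Bool × Bool) ≠ ⊥ := by decide
    have hv2 : ((false, true) : Bool × Bool) ≠ ⊥ := by decide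
    set m₁ : CartProd Q (Bool × Bool) := ⟨(t, (true, false)), Or.inr ⟨htb, hv1⟩⟩ with hm1def
    set m₂ : CartProd Q (Bool × Bool) := ⟨(t, (false, true)), Or.inr ⟨htb, hv2⟩⟩ with hm2def
    have hcoat : ∀ (m : CartProd Q (Bool × Bool)) (v : Bool × Bool), m.val = (t, v) →
        (∀ u : Bool × Bool, v ≤ u → u = v ∨ u = (true, true)) →
        ∀ y, ¬ (m < y ∧ y < T) := by
      rintro m v hmv hv y ⟨h1, h2⟩
      have h1le : m.val ≤ y.val := h1.le
      have h2le : y.val ≤ T.val := h2.le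
      have hy1 : y.val.1 = t := le_antisymm ((Prod.le_def.mp h2le).1) ((hmv ▸ Prod.le_def.mp h1le).1)
      have hy2 : v ≤ y.val.2 := (hmv ▸ Prod.le_def.mp h1le).2
      rcases hv _ hy2 with h | h
      · exact absurd (Subtype.ext (show y.val = m.val by rw [hmv]; exact Prod.ext hy1 h)) h1.ne'
      · exact absurd (Subtype.ext (show y.val = T.val from Prod.ext hy1 h)) h2.ne
    have hco1 := hcoat m₁ (true, false) rfl (by decide)
    have hco2 := hcoat m₂ (false, true) rfl (by decide)
    -- pull back to the pyramid: classification of coatoms of the pyramid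
    have pyr : ∀ m : P × Bool, (∀ y, ¬ (m < y ∧ y < (tP, true))) →
        (m.2 = true ∧ m.1 ≠ ⊥) ∨ m = (tP, false) := by
      rintro ⟨p, b⟩ hco
      cases b with
      | true =>
        refine Or.inl ⟨rfl, ?_⟩
        rintro rfl
        refine hco (w, true) ⟨?_, ?_⟩
        · exact lt_of_le_of_ne (Prod.le_def.mpr ⟨bot_le, le_rfl⟩)
            (by simp [Prod.ext_iff, Ne.symm hwbot])
        · exact lt_of_le_of_ne (Prod.le_def.mpr ⟨htP w, le_rfl⟩)
            (by simp [Prod.ext_iff, hwtop])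
      | false =>
        by_cases hp : p = tP
        · exact Or.inr (by rw [hp])
        · exfalso
          refine hco (p, true) ⟨?_, ?_⟩
          · exact lt_of_le_of_ne (Prod.le_def.mpr ⟨le_rfl, Bool.false_le _⟩)
              (by simp [Prod.ext_iff])
          · exact lt_of_le_of_ne (Prod.le_def.mpr ⟨htP p, le_rfl⟩)
              (by simp [Prod.ext_iff, hp])
    have hpull : ∀ m : CartProd Q (Bool × Bool), (∀ y, ¬ (m < y ∧ y < T)) →
        ∀ y, ¬ (e.symm m < y ∧ y < (tP, true)) := by
      rintro m hm y ⟨h1, h2⟩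
      refine hm (e y) ⟨?_, ?_⟩
      · have := e.lt_iff_lt.mpr h1
        rwa [e.apply_symm_apply] at this
      · rw [← heT]; exact e.lt_iff_lt.mpr h2
    have hM1 := pyr (e.symm m₁) (hpull m₁ hco1)
    have hM2 := pyr (e.symm m₂) (hpull m₂ hco2)
    -- produce a common nonbot lower bound of the two coatoms in the pyramid
    have hbp : (⊥ : P × Bool) = ((⊥ : P), false) := rfl
    have hkey : ∃ x : P × Bool, x ≠ ⊥ ∧ x ≤ e.symm m₁ ∧ x ≤ e.symm m₂ := by
      rcases hM1 with ⟨h1t, h1b⟩ | h1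
      · rcases hM2 with ⟨h2t, h2b⟩ | h2
        · refine ⟨((⊥ : P), true), by simp [hbp, Prod.ext_iff], ?_, ?_⟩
          · exact Prod.le_def.mpr ⟨bot_le, h1t ▸ le_rfl⟩
          · exact Prod.le_def.mpr ⟨bot_le, h2t ▸ le_rfl⟩
        · refine ⟨((e.symm m₁).1, false), by simp [Prod.ext_iff, hbp, Prod.ext_iff, h1b], ?_, ?_⟩
          · exact Prod.le_def.mpr ⟨le_rfl, Bool.false_le _⟩
          · rw [h2]; exact Prod.le_def.mpr ⟨htP _, le_rfl⟩
      · rcases hM2 with ⟨h2t, h2b⟩ | h2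
        · refine ⟨((e.symm m₂).1, false), by simp [Prod.ext_iff, hbp, Prod.ext_iff, h2b], ?_, ?_⟩
          · rw [h1]; exact Prod.le_def.mpr ⟨htP _, le_rfl⟩
          · exact Prod.le_def.mpr ⟨le_rfl, Bool.false_le _⟩
        · refine ⟨(w, false), by simp [Prod.ext_iff, hbp, Prod.ext_iff, hwbot], ?_, ?_⟩
          · rw [h1]; exact Prod.le_def.mpr ⟨htP w, le_rfl⟩
          · rw [h2]; exact Prod.le_def.mpr ⟨htP w, le_rfl⟩
    obtain ⟨x, hxne, hx1, hx2⟩ := hkey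
    -- push forward and derive the contradiction
    have hz1 : e x ≤ m₁ := by
      have := e.le_iff_le.mpr hx1; rwa [e.apply_symm_apply] at this
    have hz2 : e x ≤ m₂ := by
      have := e.le_iff_le.mpr hx2; rwa [e.apply_symm_apply] at this
    have hz2v : (e x).val.2 = (⊥ : Bool × Bool) := by
      have a1 : (e x).val.2 ≤ (true, false) := (Prod.le_def.mp (Subtype.coe_le_coe.mpr hz1)).2
      have a2 : (e x).val.2 ≤ (false, true) := (Prod.le_def.mp (Subtype.coe_le_coe.mpr hz2)).2
      have c1 : (e x).val.2.2 ≤ false := (Prod.le_def.mp a1).2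
      have c2 : (e x).val.2.1 ≤ false := (Prod.le_def.mp a2).1
      have h1 : (e x).val.2.1 = false := le_antisymm c2 (Bool.false_le _)
      have h2 : (e x).val.2.2 = false := le_antisymm c1 (Bool.false_le _)
      show (e x).val.2 = ((false, false) : Bool × Bool)
      exact Prod.ext h1 h2
    have hzbot : e x = (⊥ : CartProd Q (Bool × Bool)) := by
      apply Subtype.ext
      rcases (e x).prop with h | h
      · exact h
      · exact absurd hz2v h.2
    rw [← e.map_bot] at hzbot
    exact hxne (e.injective hzbot)
end

section
/- Let P be an abstract polytope of rank at least 1. Then the pyramid P * pt is prime with respect to the Cartesian product: there are no abstract polytopes A, B, both of rank ≥ 1, such that P * pt is order-isomorphic to A ×c B. -/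
universe u v

-- auxiliary work area
section Aux
variable {A : Type u} [PartialOrder A] [OrderBot A]

/-- there's an element different from ⊥ and from any given p, if rank ≥ 1 -/
lemma poly_exists_third {a : ℤ} (hA : IsAbstractPolytope A a) (ha : 1 ≤ a) (p : A) :
    ∃ y : A, y ≠ ⊥ ∧ y ≠ p := by
  have hs : IsMaxChain (· ≤ ·) (maxChain (· ≤ ·) : Set A) := maxChain_spec
  have hcard := hA.maxChain_card _ hs
  by_contra h
  push_neg at h
  have hsub : (maxChain (· ≤ ·) : Set A) ⊆ {⊥, p} := by
    intro y hy
    by_cases hyb : y = ⊥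
    · exact Or.inl hyb
    · exact Or.inr (h y hyb)
  have h2 := Set.ncard_le_ncard hsub (Set.toFinite _)
  have h3 : ({⊥, p} : Set A).ncard ≤ 2 :=
    le_trans (Set.ncard_insert_le _ _) (by simp [Set.ncard_singleton])
  omega

lemma poly_top_ne_bot {a : ℤ} (hA : IsAbstractPolytope A a) (ha : 1 ≤ a) {t : A}
    (ht : IsTop t) : t ≠ ⊥ := by
  obtain ⟨y, hyb, -⟩ := poly_exists_third hA ha (⊥ : A)
  intro h
  exact hyb (le_antisymm (h ▸ ht y) bot_le)

end Aux

def cartSwap (A : Type u) (B : Type u) [PartialOrder A] [OrderBot A] [PartialOrder B]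
    [OrderBot B] : CartProd A B ≃o CartProd B A where
  toFun x := ⟨(x.val.2, x.val.1), by
    rcases x.property with h | h
    · exact Or.inl (by rw [Prod.ext_iff] at h ⊢; exact ⟨h.2, h.1⟩)
    · exact Or.inr ⟨h.2, h.1⟩⟩
  invFun x := ⟨(x.val.2, x.val.1), by
    rcases x.property with h | h
    · exact Or.inl (by rw [Prod.ext_iff] at h ⊢; exact ⟨h.2, h.1⟩)
    · exact Or.inr ⟨h.2, h.1⟩⟩
  left_inv x := rfl
  right_inv x := rfl
  map_rel_iff' := by
    intro x y
    show (x.val.2, x.val.1) ≤ (y.val.2, y.val.1) ↔ x.val ≤ y.val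
    rw [Prod.le_def, Prod.le_def]
    exact and_comm

lemma pyr_core {P A B : Type u} [PartialOrder P] [OrderBot P] [PartialOrder A] [OrderBot A]
    [PartialOrder B] [OrderBot B] {a b : ℤ}
    (hA : IsAbstractPolytope A a) (hB : IsAbstractPolytope B b)
    (ha : 1 ≤ a) (hb : 1 ≤ b) {t : P} (ht : IsTop t)
    (f : (P × Bool) ≃o CartProd A B)
    (hq : ¬ ((f (⊥, true)).val.2 ≤ (f (t, false)).val.2)) : False := by
  set m := f (⊥, true) with hm
  set c := f (t, false) with hc
  have hbotX : (⊥ : CartProd A B).val = (⊥, ⊥) := rfl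
  have hfbot : f (⊥, false) = ⊥ := by
    have : ((⊥, false) : P × Bool) = ⊥ := rfl
    rw [this, f.map_bot]
  -- m ≠ ⊥
  have hmne : m ≠ ⊥ := by
    rw [← hfbot, hm]
    intro h
    have := f.injective h
    simp at this
  have hm1 : m.val.1 ≠ ⊥ ∧ m.val.2 ≠ ⊥ := by
    rcases m.property with h | h
    · exact absurd (Subtype.ext (h.trans hbotX.symm)) hmne
    · exact h
  -- dichotomy
  have hdich : ∀ x : CartProd A B, m ≤ x ∨ x ≤ c := by
    intro x
    have hx : x = f (f.symm x) := (f.apply_symm_apply x).symm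
    rcases hs : (f.symm x).2 with _ | _
    · right
      rw [hx, hc, f.le_iff_le]
      exact ⟨ht _, by rw [hs]⟩
    · left
      rw [hx, hm, f.le_iff_le]
      exact ⟨bot_le, by rw [hs]⟩
  -- atom property of m
  have hatom : ∀ y : CartProd A B, y ≤ m → y ≠ ⊥ → y = m := by
    intro y hy hyne
    have h1 : f.symm y ≤ (⊥, true) := by
      rw [← f.symm_apply_apply (⊥, true), ← hm]
      exact f.symm.monotone hy
    obtain ⟨h11, h12⟩ := Prod.le_def.mp h1
    have hw : (f.symm y).1 = ⊥ := le_bot_iff.mp h11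
    rcases hs : (f.symm y).2 with _ | _
    · exfalso
      apply hyne
      have : f.symm y = (⊥, false) := Prod.ext hw hs
      rw [← f.apply_symm_apply y, this, hfbot]
    · have : f.symm y = (⊥, true) := Prod.ext hw hs
      rw [← f.apply_symm_apply y, this, hm]
  -- top of B
  obtain ⟨tB, htB⟩ := hB.exists_top
  have htBne : tB ≠ ⊥ := poly_top_ne_bot hB hb htB
  -- p := m.val.1 is minimum of A ∖ ⊥
  have pmin : ∀ y1 : A, y1 ≠ ⊥ → m.val.1 ≤ y1 := by
    intro y1 hy1
    rcases hdich ⟨(y1, tB), Or.inr ⟨hy1, htBne⟩⟩ with h | h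
    · exact h.1
    · exact absurd (le_trans (htB m.val.2) h.2) hq
  -- element ≠ ⊥, ≠ m.1 in A
  obtain ⟨y1, hy1b, hy1p⟩ := poly_exists_third hA ha m.val.1
  set e : CartProd A B := ⟨(y1, m.val.2), Or.inr ⟨hy1b, hm1.2⟩⟩ with he
  have hme : m ≤ e := ⟨pmin y1 hy1b, le_rfl⟩
  have hem : e ≠ m := by
    intro h
    exact hy1p (congrArg (fun z : CartProd A B => z.val.1) h)
  -- f.symm e = (w, true) with w ≠ ⊥
  have hze : (⊥, true) ≤ f.symm e := by
    rw [← f.symm_apply_apply (⊥, true), ← hm]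
    exact f.symm.monotone hme
  have hz2 : (f.symm e).2 = true := by
    have := (Prod.le_def.mp hze).2
    revert this
    rcases (f.symm e).2 with _ | _ <;> simp
  set w := (f.symm e).1 with hwdef
  have hwne : w ≠ ⊥ := by
    intro h
    apply hem
    have : f.symm e = (⊥, true) := Prod.ext (hwdef ▸ h) hz2
    rw [← f.apply_symm_apply e, this, hm]
  set d := f (w, false) with hd
  have hde : d ≤ e := by
    rw [hd, ← f.apply_symm_apply e]
    apply f.monotone
    exact Prod.le_def.mpr ⟨le_rfl, by rw [hz2]; exact Bool.false_le _⟩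
  have hdne : d ≠ ⊥ := by
    rw [hd, ← hfbot]
    intro h
    exact hwne (congrArg Prod.fst (f.injective h))
  have hd12 : d.val.1 ≠ ⊥ ∧ d.val.2 ≠ ⊥ := by
    rcases d.property with h | h
    · exact absurd (Subtype.ext (h.trans hbotX.symm)) hdne
    · exact h
  have hd2m : d.val.2 = m.val.2 := by
    have hg : (⟨(m.val.1, d.val.2), Or.inr ⟨hm1.1, hd12.2⟩⟩ : CartProd A B) = m := by
      apply hatom
      · exact ⟨le_rfl, le_trans hde.2 le_rfl⟩
      · intro h
        exact hm1.1 (congrArg (fun z : CartProd A B => z.val.1) h)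
    rw [Subtype.ext_iff, Prod.ext_iff] at hg
    exact hg.2
  have hmd : m ≤ d := ⟨pmin d.val.1 hd12.1, le_of_eq hd2m.symm⟩
  have : ((⊥, true) : P × Bool) ≤ (w, false) := by
    rw [← f.symm_apply_apply (⊥, true), ← hm, ← f.symm_apply_apply (w, false), ← hd]
    exact f.symm.monotone hmd
  exact absurd (Prod.le_def.mp this).2 (by simp)


/-- For an abstract polytope `P` of rank at least `1`, the pyramid `P * pt` is
prime with respect to the Cartesian product. -/
theorem pyramid_cartPrime (P : Type u) [PartialOrder P] [OrderBot P] (n : ℤ) (hn : 1 ≤ n)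
    (hP : IsAbstractPolytope P n) :
    CartPrime (P × Bool) := by
  rintro ⟨A, B, a, b, ha, hb, hA, hB, ⟨f⟩⟩
  obtain ⟨t, ht⟩ := hP.exists_top
  have hmc : ¬ (f (⊥, true) ≤ f (t, false)) := by
    rw [f.le_iff_le]
    intro h
    exact absurd (Prod.le_def.mp h).2 (by simp)
  have hmc' : ¬ ((f (⊥, true)).val.1 ≤ (f (t, false)).val.1 ∧
      (f (⊥, true)).val.2 ≤ (f (t, false)).val.2) := by
    intro h
    exact hmc (Subtype.coe_le_coe.mp (Prod.le_def.mpr h))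
  rcases not_and_or.mp hmc' with h1 | h2
  · exact pyr_core hB hA hb ha ht (f.trans (cartSwap A.carrier B.carrier)) h1
  · exact pyr_core hA hB ha hb ht f h2
end
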